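/- Every loopless undirected multigraph G can be properly edge colored with at most Δ(G) + μ(G) colors, where Δ(G) is the maximum degree and μ(G) is the maximum edge multiplicity. -/

import Mathlib

open Classical

namespace V11

variable {V E : Type*} {N : ℕ}

def Shares (ep : E → Sym2 V) (e e' : E) : Prop := ∃ v, v ∈ ep e ∧ v ∈ ep e'

lemma Shares.symm {ep : E → Sym2 V} {e e' : E} (h : Shares ep e e') : Shares ep e' e := by
  obtain ⟨v, h1, h2⟩ := h; exact ⟨v, h2, h1⟩

def Proper (ep : E → Sym2 V) (φ : E → Option (Fin N)) : Prop :=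
  ∀ e e' (c : Fin N), e ≠ e' → Shares ep e e' → φ e = some c → φ e' ≠ some c

def Free (ep : E → Sym2 V) (φ : E → Option (Fin N)) (v : V) (c : Fin N) : Prop :=
  ¬ ∃ e, v ∈ ep e ∧ φ e = some c

lemma color_unique {ep : E → Sym2 V} {φ : E → Option (Fin N)} (hp : Proper ep φ)
    {v : V} {e e' : E} {c : Fin N} (he : v ∈ ep e) (he' : v ∈ ep e')
    (hc : φ e = some c) (hc' : φ e' = some c) : e = e' := by
  by_contra hne
  exact hp e e' c hne ⟨v, he, he'⟩ hc hc'

noncomputable def oth (ep : E → Sym2 V) (e : E) (v : V) : V :=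
  if h : ∃ w, ep e = s(v, w) then h.choose else v

lemma oth_spec {ep : E → Sym2 V} {e : E} {v : V} (h : v ∈ ep e) :
    ep e = s(v, oth ep e v) := by
  rw [Sym2.mem_iff_exists] at h
  rw [oth, dif_pos h]
  exact h.choose_spec

lemma oth_ne {ep : E → Sym2 V} (hloop : ∀ e, ¬ (ep e).IsDiag) {e : E} {v : V}
    (h : v ∈ ep e) : oth ep e v ≠ v := by
  intro hvv
  have h2 := oth_spec h
  rw [hvv] at h2
  exact hloop e (h2 ▸ Sym2.mk_isDiag_iff.2 rfl)

lemma mem_oth {ep : E → Sym2 V} {e : E} {v : V} (h : v ∈ ep e) : oth ep e v ∈ ep e := by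
  rw [oth_spec h]; exact Sym2.mem_mk_right _ _

lemma eq_or_eq_oth {ep : E → Sym2 V} {e : E} {v w : V} (h : v ∈ ep e) (hw : w ∈ ep e) :
    w = v ∨ w = oth ep e v := by
  have h2 := oth_spec h
  rw [h2, Sym2.mem_iff] at hw
  exact hw

section Swap

variable (ep : E → Sym2 V) (φ : E → Option (Fin N)) (a b : Fin N)

def AB (e : E) : Prop := φ e = some a ∨ φ e = some b

def KAdj (e e' : E) : Prop := AB φ a b e ∧ AB φ a b e' ∧ Shares ep e e' ∧ e ≠ e'

def KReach (e e' : E) : Prop := Relation.ReflTransGen (KAdj ep φ a b) e e'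

variable {ep φ a b}

lemma KAdj.symm' {e e' : E} (h : KAdj ep φ a b e e') : KAdj ep φ a b e' e :=
  ⟨h.2.1, h.1, h.2.2.1.symm, h.2.2.2.symm⟩

lemma KReach.symm' {e e' : E} (h : KReach ep φ a b e e') : KReach ep φ a b e' e :=
  (@Relation.ReflTransGen.symmetric _ _ ⟨fun _ _ hh => KAdj.symm' hh⟩).symm _ _ h

lemma KReach_AB {g e : E} (hg : AB φ a b g) (h : KReach ep φ a b g e) : AB φ a b e := by
  induction h with
  | refl => exact hg
  | tail _ hadj _ => exact hadj.2.1

variable (ep φ a b) in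
noncomputable def kswap (g₀ : E) : E → Option (Fin N) :=
  fun e => if KReach ep φ a b g₀ e then (if φ e = some a then some b else some a) else φ e

lemma kswap_not_reach {g₀ e : E} (h : ¬ KReach ep φ a b g₀ e) : kswap ep φ a b g₀ e = φ e :=
  if_neg h

lemma kswap_isSome {g₀ : E} (hg : AB φ a b g₀) (e : E) :
    (kswap ep φ a b g₀ e).isSome = (φ e).isSome := by
  unfold kswap
  split
  · next h =>
    rcases KReach_AB hg h with h' | h' <;> rw [h']
    · rw [if_pos rfl]; rfl
    · split <;> rfl
  · rfl

lemma kswap_mem_ab (hab : a ≠ b) {g₀ : E} (hg : AB φ a b g₀) {e : E}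
    (h : KReach ep φ a b g₀ e) :
    (kswap ep φ a b g₀ e = some a ∧ φ e = some b) ∨
    (kswap ep φ a b g₀ e = some b ∧ φ e = some a) := by
  have hab2 := KReach_AB hg h
  unfold kswap
  rw [if_pos h]
  rcases hab2 with h' | h'
  · right; simp [h']
  · left
    have hba : φ e ≠ some a := by rw [h']; simpa using fun hcon => hab hcon.symm
    rw [if_neg hba]
    exact ⟨rfl, h'⟩

lemma kswap_off {g₀ : E} (hab : a ≠ b) (hg : AB φ a b g₀) {e : E} {c : Fin N}
    (hca : c ≠ a) (hcb : c ≠ b) :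
    (kswap ep φ a b g₀ e = some c ↔ φ e = some c) := by
  constructor
  · intro h
    by_cases hr : KReach ep φ a b g₀ e
    · rcases kswap_mem_ab hab hg hr with ⟨h1, _⟩ | ⟨h1, _⟩ <;> rw [h] at h1 <;>
        simp_all
    · rwa [kswap_not_reach hr] at h
  · intro h
    have hr : ¬ KReach ep φ a b g₀ e := by
      intro hr
      rcases KReach_AB hg hr with h' | h' <;> rw [h] at h' <;> simp_all
    rw [kswap_not_reach hr, h]

lemma kswap_proper (hp : Proper ep φ) (hab : a ≠ b) {g₀ : E} (hg : AB φ a b g₀) :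
    Proper ep (kswap ep φ a b g₀) := by
  intro e e' c hne hsh hc hc'
  by_cases hr : KReach ep φ a b g₀ e <;> by_cases hr' : KReach ep φ a b g₀ e'
  · rcases kswap_mem_ab hab hg hr with ⟨h1, h2⟩ | ⟨h1, h2⟩ <;>
      rcases kswap_mem_ab hab hg hr' with ⟨h1', h2'⟩ | ⟨h1', h2'⟩
    · exact hp e e' b hne hsh h2 h2'
    · have ha : some a = some c := h1.symm.trans hc
      have hb : some b = some c := h1'.symm.trans hc'
      exact hab (Option.some.inj (ha.trans hb.symm))
    · have ha : some a = some c := h1'.symm.trans hc'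
      have hb : some b = some c := h1.symm.trans hc
      exact hab (Option.some.inj (ha.trans hb.symm))
    · exact hp e e' a hne hsh h2 h2'
  · rw [kswap_not_reach hr'] at hc'
    have habE' : AB φ a b e' := by
      rcases kswap_mem_ab hab hg hr with ⟨h1, _⟩ | ⟨h1, _⟩
      · have hca : some a = some c := h1.symm.trans hc
        rw [← hca] at hc'; exact Or.inl hc'
      · have hcb : some b = some c := h1.symm.trans hc
        rw [← hcb] at hc'; exact Or.inr hc'
    have habE : AB φ a b e := (KReach_AB hg hr)
    exact hr' (hr.tail ⟨habE, habE', hsh, hne⟩)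
  · rw [kswap_not_reach hr] at hc
    have habE : AB φ a b e := by
      rcases kswap_mem_ab hab hg hr' with ⟨h1, _⟩ | ⟨h1, _⟩
      · have hca : some a = some c := h1.symm.trans hc'
        rw [← hca] at hc; exact Or.inl hc
      · have hcb : some b = some c := h1.symm.trans hc'
        rw [← hcb] at hc; exact Or.inr hc
    have habE' : AB φ a b e' := (KReach_AB hg hr')
    exact hr (hr'.tail ⟨habE', habE, hsh.symm, hne.symm⟩)
  · rw [kswap_not_reach hr] at hc; rw [kswap_not_reach hr'] at hc'
    exact hp e e' c hne hsh hc hc'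

/-- If no ab-edge at `v` is in the swapped component, freeness at `v` is unchanged. -/
lemma kswap_untouched {g₀ : E}
    {v : V} (hv : ∀ e, v ∈ ep e → KReach ep φ a b g₀ e → False) {c : Fin N} :
    (Free ep (kswap ep φ a b g₀) v c ↔ Free ep φ v c) := by
  unfold Free
  constructor
  · intro h hcon
    obtain ⟨e, hve, hce⟩ := hcon
    refine h ⟨e, hve, ?_⟩
    rw [kswap_not_reach (fun hr => hv e hve hr)]
    exact hce
  · intro h hcon
    obtain ⟨e, hve, hce⟩ := hcon
    rw [kswap_not_reach (fun hr => hv e hve hr)] at hce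
    exact h ⟨e, hve, hce⟩

/-- If `v` has exactly one ab-edge `g` (colored b), and `g` is swapped,
then b becomes free at `v`. -/
lemma kswap_endpoint (hab : a ≠ b) {g₀ g : E} (hg : AB φ a b g₀) {v : V}
    (hvg : v ∈ ep g) (hgb : φ g = some b)
    (huniq : ∀ e, v ∈ ep e → AB φ a b e → e = g)
    (hr : KReach ep φ a b g₀ g) :
    Free ep (kswap ep φ a b g₀) v b := by
  rintro ⟨e, hve, hce⟩
  by_cases he : e = g
  · subst he
    rcases kswap_mem_ab hab hg hr with ⟨h1, h2⟩ | ⟨h1, h2⟩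
    · exact hab (Option.some.inj (h1.symm.trans hce))
    · exact hab (Option.some.inj (h2.symm.trans hgb))
  · by_cases hre : KReach ep φ a b g₀ e
    · exact he (huniq e hve (KReach_AB hg hre))
    · rw [kswap_not_reach hre] at hce
      exact he (huniq e hve (Or.inr hce))

end Swap

section Walk

variable {ep : E → Sym2 V} {φ : E → Option (Fin N)} {a b : Fin N}

def tog (a b c : Fin N) : Fin N := if c = a then b else a

lemma tog_mem (a b c : Fin N) : tog a b c = a ∨ tog a b c = b := by
  unfold tog; split
  · right; rfl
  · left; rfl

lemma tog_tog (hab : a ≠ b) {c : Fin N} (hc : c = a ∨ c = b) :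
    tog a b (tog a b c) = c := by
  rcases hc with h | h <;> subst h <;> simp [tog, hab, hab.symm]

lemma tog_ne (hab : a ≠ b) {c : Fin N} (hc : c = a ∨ c = b) : tog a b c ≠ c := by
  rcases hc with h | h <;> subst h <;> simp [tog, hab, hab.symm]

lemma eq_tog_of_ne (hab : a ≠ b) {c d : Fin N} (hc : c = a ∨ c = b)
    (hd : d = a ∨ d = b) (hne : d ≠ c) : d = tog a b c := by
  rcases hc with h | h <;> rcases hd with h' | h' <;> subst h <;> subst h' <;>
    simp_all [tog]

noncomputable def nxt (ep : E → Sym2 V) (φ : E → Option (Fin N)) (v : V) (c : Fin N) :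
    Option E :=
  if h : ∃ e, v ∈ ep e ∧ φ e = some c then some h.choose else none

lemma nxt_spec {v : V} {c : Fin N} {e : E} (h : nxt ep φ v c = some e) :
    v ∈ ep e ∧ φ e = some c := by
  unfold nxt at h
  split at h
  · next hex => cases h; exact hex.choose_spec
  · cases h

lemma nxt_eq (hp : Proper ep φ) {v : V} {c : Fin N} {g : E}
    (hv : v ∈ ep g) (hc : φ g = some c) : nxt ep φ v c = some g := by
  unfold nxt
  rw [dif_pos ⟨g, hv, hc⟩]
  congr 1
  have hs := (⟨g, hv, hc⟩ : ∃ e, v ∈ ep e ∧ φ e = some c).choose_spec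
  exact color_unique hp hs.1 hv hs.2 hc

lemma nxt_none {v : V} {c : Fin N} (h : nxt ep φ v c = none) {e : E}
    (hv : v ∈ ep e) (hc : φ e = some c) : False := by
  unfold nxt at h
  rw [dif_pos ⟨e, hv, hc⟩] at h
  cases h

noncomputable def ws (ep : E → Sym2 V) (φ : E → Option (Fin N)) (a b : Fin N)
    (st : V × Fin N) : ℕ → Option (V × Fin N)
  | 0 => some st
  | n + 1 => (ws ep φ a b st n).bind fun p =>
      (nxt ep φ p.1 p.2).map fun e => (oth ep e p.1, tog a b p.2)

noncomputable def wE (ep : E → Sym2 V) (φ : E → Option (Fin N)) (a b : Fin N)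
    (st : V × Fin N) (n : ℕ) : Option E :=
  (ws ep φ a b st n).bind fun p => nxt ep φ p.1 p.2

variable {st : V × Fin N}

lemma ws_succ_some {n : ℕ} {q : V × Fin N} (h : ws ep φ a b st (n + 1) = some q) :
    ∃ p e, ws ep φ a b st n = some p ∧ nxt ep φ p.1 p.2 = some e ∧
      q = (oth ep e p.1, tog a b p.2) := by
  rw [ws] at h
  rcases hws : ws ep φ a b st n with _ | p
  · rw [hws] at h; cases h
  · rw [hws] at h
    simp only [Option.bind_some] at h
    rcases hnx : nxt ep φ p.1 p.2 with _ | e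
    · rw [hnx] at h; cases h
    · rw [hnx] at h
      simp only [Option.map_some] at h
      exact ⟨p, e, rfl, hnx, (Option.some.inj h).symm⟩

lemma wE_of_parts {n : ℕ} {p : V × Fin N} {e : E} (hws : ws ep φ a b st n = some p)
    (hnx : nxt ep φ p.1 p.2 = some e) : wE ep φ a b st n = some e := by
  rw [wE, hws]; simpa using hnx

lemma wE_some {n : ℕ} {e : E} (h : wE ep φ a b st n = some e) :
    ∃ p, ws ep φ a b st n = some p ∧ nxt ep φ p.1 p.2 = some e := by
  rw [wE] at h
  rcases hws : ws ep φ a b st n with _ | p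
  · rw [hws] at h; cases h
  · rw [hws] at h; simp only [Option.bind_some] at h
    exact ⟨p, rfl, h⟩

lemma ws_none_succ {n : ℕ} (h : ws ep φ a b st n = none) :
    ws ep φ a b st (n + 1) = none := by
  rw [ws, h]; rfl

lemma ws_none_mono {n m : ℕ} (h : ws ep φ a b st n = none) (hnm : n ≤ m) :
    ws ep φ a b st m = none := by
  induction m with
  | zero => simpa using (Nat.le_zero.1 hnm ▸ h)
  | succ k ih =>
    rcases Nat.lt_or_ge n (k+1) with h' | h'
    · exact ws_none_succ (ih (by omega))
    · have hnk : n = k + 1 := by omega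
      exact hnk ▸ h

lemma ws_color (hst : st.2 = a ∨ st.2 = b) {n : ℕ} {p : V × Fin N}
    (h : ws ep φ a b st n = some p) : p.2 = a ∨ p.2 = b := by
  cases n with
  | zero => rw [ws] at h; cases h; exact hst
  | succ k =>
    obtain ⟨p', e, _, _, hq⟩ := ws_succ_some h
    subst hq; exact tog_mem _ _ _

/-- injectivity of the step -/
lemma ws_step_inj (hp : Proper ep φ) (hloop : ∀ e, ¬ (ep e).IsDiag) (hab : a ≠ b)
    {m n : ℕ} {q p p' : V × Fin N}
    (hpc : p.2 = a ∨ p.2 = b) (hpc' : p'.2 = a ∨ p'.2 = b)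
    (hm : ws ep φ a b st m = some p) (hn : ws ep φ a b st n = some p')
    (hm1 : ws ep φ a b st (m+1) = some q) (hn1 : ws ep φ a b st (n+1) = some q) :
    p = p' := by
  obtain ⟨p₁, e, hws1, hnx1, hq1⟩ := ws_succ_some hm1
  obtain ⟨p₂, e', hws2, hnx2, hq2⟩ := ws_succ_some hn1
  rw [hm] at hws1; rw [hn] at hws2
  cases hws1; cases hws2
  have hc : p.2 = p'.2 := by
    have h2 : tog a b p.2 = tog a b p'.2 := congrArg Prod.snd (hq1.symm.trans hq2)
    calc p.2 = tog a b (tog a b p.2) := (tog_tog hab hpc).symm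
    _ = tog a b (tog a b p'.2) := by rw [h2]
    _ = p'.2 := tog_tog hab hpc'
  obtain ⟨hve, hce⟩ := nxt_spec hnx1
  obtain ⟨hve', hce'⟩ := nxt_spec hnx2
  rw [hc] at hce
  have hq1v : q.1 = oth ep e p.1 := congrArg Prod.fst hq1
  have hq2v : q.1 = oth ep e' p'.1 := congrArg Prod.fst hq2
  have hqe : q.1 ∈ ep e := hq1v ▸ mem_oth hve
  have hqe' : q.1 ∈ ep e' := hq2v ▸ mem_oth hve'
  have hee : e = e' := color_unique hp hqe hqe' hce hce'
  subst hee
  have hne1 : oth ep e p.1 ≠ p.1 := oth_ne hloop hve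
  have hne2 : oth ep e p'.1 ≠ p'.1 := oth_ne hloop hve'
  have hv : p.1 = p'.1 := by
    rcases eq_or_eq_oth hve hve' with h | h
    · exact h.symm
    · exact (hne2 (hq2v.symm.trans (hq1v.trans h.symm))).elim
  exact Prod.ext hv hc

end Walk

section Walk2

variable {ep : E → Sym2 V} {φ : E → Option (Fin N)} {a b : Fin N} {z : V} {c₀ : Fin N}
  {gz : E}

lemma ws_some_of_succ {st : V × Fin N} {n : ℕ} {q : V × Fin N}
    (h : ws ep φ a b st (n+1) = some q) : ∃ p, ws ep φ a b st n = some p := by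
  obtain ⟨p, e, hp, _, _⟩ := ws_succ_some h
  exact ⟨p, hp⟩

lemma ws_succ_eq {n : ℕ} {st p : V × Fin N} {e : E} (hws : ws ep φ a b st n = some p)
    (hnx : nxt ep φ p.1 p.2 = some e) :
    ws ep φ a b st (n+1) = some (oth ep e p.1, tog a b p.2) := by
  rw [ws, hws]
  simp only [Option.bind_some, hnx, Option.map_some]

lemma ws_arrival (hc₀ : c₀ = a ∨ c₀ = b) {k : ℕ} {p : V × Fin N} (hab : a ≠ b)
    (h : ws ep φ a b (z, c₀) (k+1) = some p) :
    ∃ e₂, wE ep φ a b (z, c₀) k = some e₂ ∧ φ e₂ = some (tog a b p.2) ∧ p.1 ∈ ep e₂ := by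
  obtain ⟨p', e₂, hws, hnx, hq⟩ := ws_succ_some h
  obtain ⟨hv, hc⟩ := nxt_spec hnx
  have hpc' : p'.2 = a ∨ p'.2 = b := ws_color hc₀ hws
  refine ⟨e₂, wE_of_parts hws hnx, ?_, ?_⟩
  · have h2 : p.2 = tog a b p'.2 := congrArg Prod.snd hq
    rw [h2, tog_tog hab hpc']
    exact hc
  · have h1 : p.1 = oth ep e₂ p'.1 := congrArg Prod.fst hq
    rw [h1]
    exact mem_oth hv

lemma ws_no_return (hab : a ≠ b) (hc₀ : c₀ = a ∨ c₀ = b)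
    (hgz : φ gz = some c₀)
    (hzu : ∀ e, z ∈ ep e → AB φ a b e → e = gz) {n : ℕ} :
    ws ep φ a b (z, c₀) (n+1) ≠ some (z, c₀) := by
  intro h
  obtain ⟨e₂, _, hce, hze⟩ := ws_arrival hc₀ hab h
  have habe : AB φ a b e₂ := by
    rcases tog_mem a b ((z, c₀) : V × Fin N).2 with h' | h'
    · exact Or.inl (by rw [hce, h'])
    · exact Or.inr (by rw [hce, h'])
  have he : e₂ = gz := hzu e₂ hze habe
  rw [he, hgz] at hce
  exact tog_ne hab hc₀ (Option.some.inj hce).symm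

lemma ws_inj (hp : Proper ep φ) (hloop : ∀ e, ¬ (ep e).IsDiag) (hab : a ≠ b)
    (hc₀ : c₀ = a ∨ c₀ = b) (hgz : φ gz = some c₀)
    (hzu : ∀ e, z ∈ ep e → AB φ a b e → e = gz) :
    ∀ m n (p : V × Fin N), m < n → ws ep φ a b (z, c₀) m = some p →
      ws ep φ a b (z, c₀) n = some p → False := by
  intro m
  induction m with
  | zero =>
    intro n p hmn h0 hn
    rw [ws] at h0
    cases h0
    obtain ⟨k, rfl⟩ : ∃ k, n = k + 1 := ⟨n - 1, by omega⟩
    exact ws_no_return hab hc₀ hgz hzu hn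
  | succ k ih =>
    intro n p hmn hm hn
    obtain ⟨l, rfl⟩ : ∃ l, n = l + 1 := ⟨n - 1, by omega⟩
    obtain ⟨p₁, hp₁⟩ := ws_some_of_succ hm
    obtain ⟨p₂, hp₂⟩ := ws_some_of_succ hn
    have hc1 : p₁.2 = a ∨ p₁.2 = b := ws_color hc₀ hp₁
    have hc2 : p₂.2 = a ∨ p₂.2 = b := ws_color hc₀ hp₂
    have heq : p₁ = p₂ := ws_step_inj hp hloop hab hc1 hc2 hp₁ hp₂ hm hn
    exact ih l p₁ (by omega) hp₁ (heq ▸ hp₂)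

/-- edge is on the walk -/
def WIn (ep : E → Sym2 V) (φ : E → Option (Fin N)) (a b : Fin N) (st : V × Fin N)
    (e : E) : Prop := ∃ n, wE ep φ a b st n = some e

lemma WIn_base (hp : Proper ep φ) (hzgz : z ∈ ep gz) (hgz : φ gz = some c₀) :
    WIn ep φ a b (z, c₀) gz := by
  refine ⟨0, ?_⟩
  rw [wE, ws]
  simp only [Option.bind_some]
  exact nxt_eq hp hzgz hgz

lemma WIn_closure (hp : Proper ep φ) (hab : a ≠ b) (hc₀ : c₀ = a ∨ c₀ = b)
    (hgz : φ gz = some c₀)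
    (hzu : ∀ e, z ∈ ep e → AB φ a b e → e = gz) {e e' : E}
    (hW : WIn ep φ a b (z, c₀) e) (hadj : KAdj ep φ a b e e') :
    WIn ep φ a b (z, c₀) e' := by
  obtain ⟨n, hn⟩ := hW
  obtain ⟨p, hws, hnx⟩ := wE_some hn
  obtain ⟨hve, hce⟩ := nxt_spec hnx
  obtain ⟨_, habe', ⟨q, hqe, hqe'⟩, hne⟩ := hadj
  have hpc : p.2 = a ∨ p.2 = b := ws_color hc₀ hws
  obtain ⟨d, hd⟩ : ∃ d, φ e' = some d ∧ (d = a ∨ d = b) := by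
    rcases habe' with h' | h'
    · exact ⟨a, h', Or.inl rfl⟩
    · exact ⟨b, h', Or.inr rfl⟩
  obtain ⟨hd, hdm⟩ := hd
  rcases eq_or_eq_oth hve hqe with hq | hq
  · subst hq
    by_cases hdp : d = p.2
    · exact (hne (color_unique hp hqe' hve (hdp ▸ hd) hce).symm).elim
    · have hdt : d = tog a b p.2 := eq_tog_of_ne hab hpc hdm hdp
      cases n with
      | zero =>
        rw [ws] at hws
        cases hws
        have he'gz : e' = gz := hzu e' hqe' habe'
        have habe : AB φ a b e := by
          rcases hc₀ with h' | h'
          · exact Or.inl (h' ▸ hce)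
          · exact Or.inr (h' ▸ hce)
        have hegz : e = gz := hzu e hqe habe
        exact (hne (hegz.trans he'gz.symm)).elim
      | succ k =>
        obtain ⟨e₂, hwek, hce₂, hve₂⟩ := ws_arrival hc₀ hab hws
        have he' : e' = e₂ := color_unique hp hqe' hve₂ (hdt ▸ hd) hce₂
        exact ⟨k, he' ▸ hwek⟩
  · by_cases hdp : d = p.2
    · have hqee : q ∈ ep e := hq ▸ mem_oth hve
      exact (hne (color_unique hp hqe' hqee (hdp ▸ hd) hce).symm).elim
    · have hdt : d = tog a b p.2 := eq_tog_of_ne hab hpc hdm hdp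
      have hws1 : ws ep φ a b (z, c₀) (n+1) = some (oth ep e p.1, tog a b p.2) :=
        ws_succ_eq hws hnx
      rcases hnx2 : nxt ep φ (oth ep e p.1) (tog a b p.2) with _ | e₃
      · exact (nxt_none hnx2 (hq ▸ hqe') (hdt ▸ hd)).elim
      · obtain ⟨hve₃, hce₃⟩ := nxt_spec hnx2
        have hqe'' : q ∈ ep e' := hqe'
        have he' : e' = e₃ := by
          refine color_unique hp ?_ hve₃ (hdt ▸ hd) hce₃
          rw [← hq]
          exact hqe'
        refine ⟨n+1, he' ▸ ?_⟩
        have : (( (oth ep e p.1, tog a b p.2) : V × Fin N)).1 = oth ep e p.1 := rfl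
        exact wE_of_parts hws1 hnx2
  
lemma WIn_of_reach (hp : Proper ep φ) (hab : a ≠ b) (hc₀ : c₀ = a ∨ c₀ = b)
    (hzgz : z ∈ ep gz) (hgz : φ gz = some c₀)
    (hzu : ∀ e, z ∈ ep e → AB φ a b e → e = gz) {e : E}
    (hr : KReach ep φ a b gz e) : WIn ep φ a b (z, c₀) e := by
  induction hr with
  | refl => exact WIn_base hp hzgz hgz
  | tail _ hadj ih => exact WIn_closure hp hab hc₀ hgz hzu ih hadj

lemma walk_terminal (hp : Proper ep φ) (hab : a ≠ b) (hc₀ : c₀ = a ∨ c₀ = b)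
    (hgz : φ gz = some c₀)
    (hzu : ∀ e, z ∈ ep e → AB φ a b e → e = gz) {u : V} {gu : E}
    (hu : u ∈ ep gu) (huu : ∀ e, u ∈ ep e → AB φ a b e → e = gu) (hunz : u ≠ z)
    (hW : WIn ep φ a b (z, c₀) gu) :
    ∃ (m : ℕ) (q : V × Fin N), ws ep φ a b (z, c₀) (m+1) = some q ∧ q.1 = u ∧
      ws ep φ a b (z, c₀) (m+2) = none := by
  obtain ⟨n, hn⟩ := hW
  obtain ⟨p, hws, hnx⟩ := wE_some hn
  obtain ⟨hve, hce⟩ := nxt_spec hnx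
  have hpc : p.2 = a ∨ p.2 = b := ws_color hc₀ hws
  rcases eq_or_eq_oth hve hu with hq | hq
  · cases n with
    | zero =>
      rw [ws] at hws
      cases hws
      exact (hunz hq).elim
    | succ k =>
      obtain ⟨e₂, hwek, hce₂, hve₂⟩ := ws_arrival hc₀ hab hws
      have habe₂ : AB φ a b e₂ := by
        rcases tog_mem a b p.2 with h' | h'
        · exact Or.inl (h' ▸ hce₂)
        · exact Or.inr (h' ▸ hce₂)
      have he₂ : e₂ = gu := huu e₂ (hq ▸ hve₂) habe₂
      rw [he₂, hce] at hce₂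
      exact (tog_ne hab hpc (Option.some.inj hce₂).symm).elim
  · have hws1 : ws ep φ a b (z, c₀) (n+1) = some (oth ep gu p.1, tog a b p.2) :=
      ws_succ_eq hws hnx
    rcases hnone : ws ep φ a b (z, c₀) (n+2) with _ | q'
    · exact ⟨n, (oth ep gu p.1, tog a b p.2), hws1, hq.symm, hnone⟩
    · obtain ⟨p', e₃, hws', hnx₃, _⟩ := ws_succ_some hnone
      rw [hws1] at hws'
      cases hws'
      obtain ⟨hve₃, hce₃⟩ := nxt_spec hnx₃
      have habe₃ : AB φ a b e₃ := by
        rcases tog_mem a b p.2 with h' | h'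
        · exact Or.inl (h' ▸ hce₃)
        · exact Or.inr (h' ▸ hce₃)
      have he₃ : e₃ = gu := huu e₃ (hq ▸ hve₃) habe₃
      rw [he₃, hce] at hce₃
      exact (tog_ne hab hpc (Option.some.inj hce₃).symm).elim

/-- THE KEY LEMMA: at most one chain endpoint other than z. -/
lemma chain_endpoint_unique [Fintype V] (hp : Proper ep φ)
    (hloop : ∀ e, ¬ (ep e).IsDiag) (hab : a ≠ b)
    (hzgz : z ∈ ep gz) (hc₀ : c₀ = a ∨ c₀ = b) (hgz : φ gz = some c₀)
    (hzu : ∀ e, z ∈ ep e → AB φ a b e → e = gz)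
    {u u' : V} {gu gu' : E}
    (hu : u ∈ ep gu) (huu : ∀ e, u ∈ ep e → AB φ a b e → e = gu) (hunz : u ≠ z)
    (hu' : u' ∈ ep gu') (huu' : ∀ e, u' ∈ ep e → AB φ a b e → e = gu') (hunz' : u' ≠ z)
    (hr : KReach ep φ a b gz gu) (hr' : KReach ep φ a b gz gu') : u = u' := by
  obtain ⟨m, q, hm1, hqu, hm2⟩ := walk_terminal hp hab hc₀ hgz hzu hu huu hunz
    (WIn_of_reach hp hab hc₀ hzgz hgz hzu hr)
  obtain ⟨m', q', hm1', hqu', hm2'⟩ := walk_terminal hp hab hc₀ hgz hzu hu' huu' hunz'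
    (WIn_of_reach hp hab hc₀ hzgz hgz hzu hr')
  have hmm : m = m' := by
    rcases Nat.lt_or_ge m m' with h' | h'
    · have hnone := ws_none_mono (m := m' + 1) hm2 (by omega)
      rw [hm1'] at hnone
      cases hnone
    · rcases Nat.lt_or_ge m' m with h'' | h''
      · have hnone := ws_none_mono (m := m + 1) hm2' (by omega)
        rw [hm1] at hnone
        cases hnone
      · omega
  subst hmm
  rw [hm1] at hm1'
  cases hm1'
  exact hqu.symm.trans hqu'

end Walk2

section Fan

variable {ep : E → Sym2 V} {φ : E → Option (Fin N)} {x : V} {e₁ : E}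

/-- A multi-fan at `x` with first (uncolored) edge `e₁`. -/
structure IsFan (ep : E → Sym2 V) (φ : E → Option (Fin N)) (x : V) (e₁ : E)
    (p : ℕ) (ed : ℕ → E) (vx : ℕ → V) : Prop where
  pos : 0 < p
  first : ed 0 = e₁
  ends : ∀ i, i < p → ep (ed i) = s(x, vx i)
  inj : ∀ i, i < p → ∀ j, j < p → ed i = ed j → i = j
  cond : ∀ i, 0 < i → i < p → ∃ c m, m < i ∧ φ (ed i) = some c ∧ Free ep φ (vx m) c

/-- `φ` cannot be extended to color `e₁` as well. -/
def NoExt (ep : E → Sym2 V) (φ : E → Option (Fin N)) (e₁ : E) : Prop :=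
  ¬ ∃ ψ : E → Option (Fin N), Proper ep ψ ∧ (∀ e, (φ e).isSome → (ψ e).isSome) ∧
    (ψ e₁).isSome

/-- Lemma (a): a color free at `x` is not free at any fan vertex. -/
lemma fanA (hp : Proper ep φ) (hnext : NoExt ep φ e₁)
    {p : ℕ} {ed : ℕ → E} {vx : ℕ → V} (hfan : IsFan ep φ x e₁ p ed vx)
    {i : ℕ} (hi : i < p) {c : Fin N}
    (hcx : Free ep φ x c) (hcy : Free ep φ (vx i) c) : False := by
  have chain : ∀ i, i < p → ∃ (s : ℕ) (idx : ℕ → ℕ) (cc : ℕ → Fin N),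
      idx 0 = 0 ∧ idx s = i ∧ (∀ l, l < s → idx l < idx (l+1)) ∧
      (∀ l, l ≤ s → idx l < p) ∧
      (∀ l, l < s → φ (ed (idx (l+1))) = some (cc l) ∧ Free ep φ (vx (idx l)) (cc l)) := by
    intro i
    induction i using Nat.strong_induction_on with
    | _ i ih =>
      intro hip
      rcases Nat.eq_zero_or_pos i with rfl | hipos
      · exact ⟨0, fun _ => 0, fun _ => c, rfl, rfl, fun l hl => absurd hl (by omega),
          fun l _ => hfan.pos, fun l hl => absurd hl (by omega)⟩
      · obtain ⟨c', m, hmi, hcol, hfree⟩ := hfan.cond i hipos hip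
        obtain ⟨s', idx', cc', h0, hs, hstep, hbnd, hcc⟩ := ih m hmi (by omega)
        refine ⟨s' + 1, fun l => if l = s' + 1 then i else idx' l,
          fun l => if l = s' then c' else cc' l, ?_, ?_, ?_, ?_, ?_⟩
        · show (if 0 = s' + 1 then i else idx' 0) = 0
          rw [if_neg (by omega)]; exact h0
        · show (if s' + 1 = s' + 1 then i else idx' (s' + 1)) = i
          rw [if_pos rfl]
        · intro l hl
          show (if l = s' + 1 then i else idx' l) <
            (if l + 1 = s' + 1 then i else idx' (l + 1))
          rcases Nat.lt_or_ge l s' with h' | h'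
          · rw [if_neg (by omega), if_neg (by omega)]
            exact hstep l h'
          · have hls : l = s' := by omega
            subst hls
            rw [if_neg (by omega), if_pos rfl, hs]
            exact hmi
        · intro l hl
          show (if l = s' + 1 then i else idx' l) < p
          rcases Nat.lt_or_ge l (s' + 1) with h' | h'
          · rw [if_neg (by omega)]; exact hbnd l (by omega)
          · rw [if_pos (by omega)]; exact hip
        · intro l hl
          show φ (ed (if l + 1 = s' + 1 then i else idx' (l + 1))) =
              some (if l = s' then c' else cc' l) ∧
            Free ep φ (vx (if l = s' + 1 then i else idx' l))
              (if l = s' then c' else cc' l)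
          rcases Nat.lt_or_ge l s' with h' | h'
          · rw [if_neg (by omega), if_neg (by omega), if_neg (by omega)]
            exact hcc l h'
          · have hls : l = s' := by omega
            subst hls
            rw [if_pos rfl, if_pos rfl, if_neg (by omega), hs]
            exact ⟨hcol, hfree⟩
  obtain ⟨s, idx, cc, h0, hs, hstep, hbnd, hcc⟩ := chain i hi
  have hmono : ∀ l l', l < l' → l' ≤ s → idx l < idx l' := by
    intro l l' hll' hl's
    induction l' with
    | zero => omega
    | succ k ihk =>
      rcases Nat.lt_or_ge l k with h' | h'
      · exact lt_trans (ihk h' (by omega)) (hstep k (by omega))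
      · have hlk : l = k := by omega
        subst hlk
        exact hstep l (by omega)
  set k : ℕ → E := fun l => ed (idx l) with hk
  have hkinj : ∀ l, l ≤ s → ∀ l', l' ≤ s → k l = k l' → l = l' := by
    intro l hl l' hl' hkk
    have heq := hfan.inj (idx l) (hbnd l hl) (idx l') (hbnd l' hl') hkk
    rcases Nat.lt_trichotomy l l' with h' | h' | h'
    · exact absurd heq (Nat.ne_of_lt (hmono l l' h' hl'))
    · exact h'
    · exact absurd heq.symm (Nat.ne_of_lt (hmono l' l h' hl))
  have hxmem : ∀ j, j < p → x ∈ ep (ed j) := by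
    intro j hj; rw [hfan.ends j hj]; exact Sym2.mem_mk_left _ _
  have hvmem : ∀ j, j < p → vx j ∈ ep (ed j) := by
    intro j hj; rw [hfan.ends j hj]; exact Sym2.mem_mk_right _ _
  set nc : ℕ → Fin N := fun l => if l = s then c else cc l with hnc
  have hnc_s : nc s = c := by simp [hnc]
  have hnc_lt : ∀ l, l < s → nc l = cc l := by intro l hl; simp [hnc, Nat.ne_of_lt hl]
  have hnc_free : ∀ l, l ≤ s → Free ep φ (vx (idx l)) (nc l) := by
    intro l hl
    rcases Nat.lt_or_ge l s with h' | h'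
    · rw [hnc_lt l h']; exact (hcc l h').2
    · have hls : l = s := by omega
      subst hls
      rw [hnc_s, hs]; exact hcy
  have hnc_pres : ∀ l, l < s → φ (k (l+1)) = some (nc l) := by
    intro l hl
    rw [hnc_lt l hl]; exact (hcc l hl).1
  have hncinj : ∀ l, l ≤ s → ∀ l', l' ≤ s → nc l = nc l' → l = l' := by
    intro l hl l' hl' hee
    rcases Nat.lt_or_ge l s with h' | h' <;> rcases Nat.lt_or_ge l' s with h'' | h''
    · have h1 := hnc_pres l h'
      have h2 := hnc_pres l' h''
      rw [hee] at h1
      have heq := color_unique hp (hxmem _ (hbnd (l+1) (by omega)))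
        (hxmem _ (hbnd (l'+1) (by omega))) h1 h2
      have := hkinj (l+1) (by omega) (l'+1) (by omega) heq
      omega
    · have hl's : l' = s := by omega
      subst hl's
      have h1 := hnc_pres l h'
      rw [hee, hnc_s] at h1
      exact (hcx ⟨k (l+1), hxmem _ (hbnd (l+1) (by omega)), h1⟩).elim
    · have hls : l = s := by omega
      subst hls
      have h1 := hnc_pres l' h''
      rw [← hee, hnc_s] at h1
      exact (hcx ⟨k (l'+1), hxmem _ (hbnd (l'+1) (by omega)), h1⟩).elim
    · omega
  set K : E → Prop := fun e => ∃ l, l ≤ s ∧ e = k l with hK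
  set ψ : E → Option (Fin N) := fun e => if h : K e then some (nc h.choose) else φ e with hψ
  have hψk : ∀ l, l ≤ s → ψ (k l) = some (nc l) := by
    intro l hl
    have hKk : K (k l) := ⟨l, hl, rfl⟩
    have hch := hKk.choose_spec
    simp only [hψ, dif_pos hKk]
    rw [hkinj _ hch.1 _ hl hch.2.symm]
  have hψn : ∀ e, ¬ K e → ψ e = φ e := by
    intro e he; simp only [hψ, dif_neg he]
  have hψp : Proper ep ψ := by
    intro e e' d hne hsh hce hce'
    by_cases hKe : K e <;> by_cases hKe' : K e'
    · obtain ⟨l, hl, rfl⟩ := hKe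
      obtain ⟨l', hl', rfl⟩ := hKe'
      rw [hψk l hl] at hce
      rw [hψk l' hl'] at hce'
      have hll : l = l' := hncinj l hl l' hl'
        ((Option.some.inj hce).trans (Option.some.inj hce').symm)
      exact hne (by rw [hll])
    · obtain ⟨l, hl, rfl⟩ := hKe
      rw [hψk l hl] at hce
      rw [hψn e' hKe'] at hce'
      have hdl : d = nc l := (Option.some.inj hce).symm
      subst hdl
      obtain ⟨q, hqe, hqe'⟩ := hsh
      have hql : q ∈ ep (ed (idx l)) := hqe
      rw [hfan.ends (idx l) (hbnd l hl), Sym2.mem_iff] at hql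
      rcases hql with rfl | rfl
      · rcases Nat.lt_or_ge l s with h' | h'
        · have h1 := hnc_pres l h'
          have heq := color_unique hp (hxmem _ (hbnd (l+1) (by omega))) hqe' h1 hce'
          exact hKe' ⟨l+1, by omega, heq.symm⟩
        · have hls : l = s := by omega
          subst hls
          rw [hnc_s] at hce'
          exact hcx ⟨e', hqe', hce'⟩
      · exact hnc_free l hl ⟨e', hqe', hce'⟩
    · obtain ⟨l, hl, rfl⟩ := hKe'
      rw [hψk l hl] at hce'
      rw [hψn e hKe] at hce
      have hdl : d = nc l := (Option.some.inj hce').symm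
      subst hdl
      obtain ⟨q, hqe, hqe'⟩ := hsh
      have hql : q ∈ ep (ed (idx l)) := hqe'
      rw [hfan.ends (idx l) (hbnd l hl), Sym2.mem_iff] at hql
      rcases hql with rfl | rfl
      · rcases Nat.lt_or_ge l s with h' | h'
        · have h1 := hnc_pres l h'
          have heq := color_unique hp (hxmem _ (hbnd (l+1) (by omega))) hqe h1 hce
          exact hKe ⟨l+1, by omega, heq.symm⟩
        · have hls : l = s := by omega
          subst hls
          rw [hnc_s] at hce
          exact hcx ⟨e, hqe, hce⟩
      · exact hnc_free l hl ⟨e, hqe, hce⟩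
    · rw [hψn e hKe] at hce
      rw [hψn e' hKe'] at hce'
      exact hp e e' d hne hsh hce hce'
  refine hnext ⟨ψ, hψp, ?_, ?_⟩
  · intro e hesome
    by_cases hKe : K e
    · obtain ⟨l, hl, rfl⟩ := hKe
      rw [hψk l hl]; rfl
    · rw [hψn e hKe]; exact hesome
  · have he₁ : e₁ = k 0 := by rw [hk]; simp only [h0]; exact hfan.first.symm
    rw [he₁, hψk 0 (by omega)]; rfl

end Fan

section FanB

variable {ep : E → Sym2 V} {φ : E → Option (Fin N)} {x : V} {e₁ : E}

lemma kswap_free_off {a b : Fin N} (hab : a ≠ b) {g₀ : E} (hg : AB φ a b g₀)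
    {v : V} {c : Fin N} (hca : c ≠ a) (hcb : c ≠ b) :
    Free ep (kswap ep φ a b g₀) v c ↔ Free ep φ v c := by
  unfold Free
  constructor
  · intro h hcon
    obtain ⟨e, hve, hce⟩ := hcon
    exact h ⟨e, hve, (kswap_off hab hg hca hcb).2 hce⟩
  · intro h hcon
    obtain ⟨e, hve, hce⟩ := hcon
    exact h ⟨e, hve, (kswap_off hab hg hca hcb).1 hce⟩

lemma NoExt_kswap {a b : Fin N} (hab : a ≠ b) {g₀ : E} (hg : AB φ a b g₀)
    (h : NoExt ep φ e₁) : NoExt ep (kswap ep φ a b g₀) e₁ := by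
  rintro ⟨ψ, hψ, hdom, he⟩
  exact h ⟨ψ, hψ, fun e hs => hdom e (by rw [kswap_isSome hg]; exact hs), he⟩

/-- Lemma (b): a common free color at two distinct fan vertices is impossible. -/
lemma fanB [Fintype V] (hp : Proper ep φ) (hloop : ∀ e, ¬ (ep e).IsDiag)
    (hnext : NoExt ep φ e₁) (he₁ : φ e₁ = none)
    {p : ℕ} {ed : ℕ → E} {vx : ℕ → V} (hfan : IsFan ep φ x e₁ p ed vx)
    {δ : Fin N} (hδ : Free ep φ x δ)
    {i j : ℕ} (hi : i < p) (hj : j < p) (hvij : vx i ≠ vx j)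
    {α : Fin N} (hαi : Free ep φ (vx i) α) (hαj : Free ep φ (vx j) α) : False := by
  have hxmem : ∀ l, l < p → x ∈ ep (ed l) := by
    intro l hl; rw [hfan.ends l hl]; exact Sym2.mem_mk_left _ _
  have hαx : ¬ Free ep φ x α := fun h => fanA hp hnext hfan hi h hαi
  obtain ⟨fx, hfx_mem, hfx_col⟩ := Classical.not_not.mp hαx
  have hab : α ≠ δ := by
    intro h
    subst h
    exact hαx hδ
  have hxu : ∀ e, x ∈ ep e → AB φ α δ e → e = fx := by
    intro e hxe habe
    rcases habe with h' | h'
    · exact color_unique hp hxe hfx_mem h' hfx_col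
    · exact (hδ ⟨e, hxe, h'⟩).elim
  have hδpres : ∀ l, l < p → ¬ Free ep φ (vx l) δ := fun l hl h =>
    fanA hp hnext hfan hl hδ h
  have hgdata : ∀ l, l < p → Free ep φ (vx l) α →
      vx l ≠ x ∧ ∃ g, vx l ∈ ep g ∧ φ g = some δ ∧
        (∀ e, vx l ∈ ep e → AB φ α δ e → e = g) := by
    intro l hl hfree
    have hne : vx l ≠ x := by
      intro h
      rw [h] at hfree
      exact hαx hfree
    obtain ⟨g, hg_mem, hg_col⟩ := Classical.not_not.mp (hδpres l hl)
    refine ⟨hne, g, hg_mem, hg_col, ?_⟩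
    intro e hve habe
    rcases habe with h' | h'
    · exact (hfree ⟨e, hve, h'⟩).elim
    · exact color_unique hp hve hg_mem h' hg_col
  have hP : ∃ l, l < p ∧ Free ep φ (vx l) α := ⟨i, hi, hαi⟩
  classical
  set i₀ := Nat.find hP with hi₀def
  obtain ⟨hi₀p, hi₀free⟩ := Nat.find_spec hP
  have hclean : ∀ l, l ≤ i₀ → φ (ed l) ≠ some α := by
    intro l hl hcol
    rcases Nat.eq_zero_or_pos l with rfl | hl0
    · rw [hfan.first, he₁] at hcol; cases hcol
    · obtain ⟨c, m, hm, hc, hf⟩ := hfan.cond l hl0 (by omega)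
      rw [hc] at hcol
      have hcα : c = α := Option.some.inj hcol
      subst hcα
      have hle : i₀ ≤ m := Nat.find_le ⟨by omega, hf⟩
      omega
  obtain ⟨j', hj'p, hj'free, hj'ne⟩ :
      ∃ j', j' < p ∧ Free ep φ (vx j') α ∧ vx j' ≠ vx i₀ := by
    by_cases h : vx i = vx i₀
    · exact ⟨j, hj, hαj, fun hh => hvij (h.trans hh.symm)⟩
    · exact ⟨i, hi, hαi, h⟩
  obtain ⟨hux, gu, hgu_mem, hgu_col, hgu_uniq⟩ := hgdata i₀ hi₀p hi₀free
  obtain ⟨hwx, gw, hgw_mem, hgw_col, hgw_uniq⟩ := hgdata j' hj'p hj'free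
  have hABfx : AB φ α δ fx := Or.inl hfx_col
  have hABgu : AB φ α δ gu := Or.inr hgu_col
  have hABgw : AB φ α δ gw := Or.inr hgw_col
  have main : ∀ (g₀ : E) (t : ℕ), AB φ α δ g₀ → ¬ KReach ep φ α δ fx g₀ →
      t < p →
      Free ep (kswap ep φ α δ g₀) (vx t) δ →
      (∀ l, 0 < l → l ≤ t → ∃ c m, m < l ∧ kswap ep φ α δ g₀ (ed l) = some c ∧
        Free ep (kswap ep φ α δ g₀) (vx m) c) → False := by
    intro g₀ t hg₀ hnr htp hfreet hconds
    have hp' : Proper ep (kswap ep φ α δ g₀) := kswap_proper hp hab hg₀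
    have hnext' : NoExt ep (kswap ep φ α δ g₀) e₁ := NoExt_kswap hab hg₀ hnext
    have hfan' : IsFan ep (kswap ep φ α δ g₀) x e₁ (t+1) ed vx :=
      ⟨by omega, hfan.first, fun l hl => hfan.ends l (by omega),
        fun l hl l' hl' h => hfan.inj l (by omega) l' (by omega) h,
        fun l h0 hl => hconds l h0 (by omega)⟩
    have hxuntouched : ∀ e, x ∈ ep e → KReach ep φ α δ g₀ e → False := by
      intro e hxe hre
      have habe : AB φ α δ e := KReach_AB hg₀ hre
      have hh : e = fx := hxu e hxe habe
      subst hh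
      exact hnr (KReach.symm' hre)
    have hδx' : Free ep (kswap ep φ α δ g₀) x δ :=
      (kswap_untouched hxuntouched).2 hδ
    exact fanA hp' hnext' hfan' (Nat.lt_succ_self t) hδx' hfreet
  have hstep_cond : ∀ (g₀ : E), AB φ α δ g₀ → ∀ l, 0 < l → l < p →
      φ (ed l) ≠ some α → ∃ c m, m < l ∧ kswap ep φ α δ g₀ (ed l) = some c ∧
        Free ep (kswap ep φ α δ g₀) (vx m) c := by
    intro g₀ hg₀ l h0 hlp hnα
    obtain ⟨c, m, hm, hc, hf⟩ := hfan.cond l h0 hlp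
    have hcα : c ≠ α := fun h => hnα (h ▸ hc)
    have hcδ : c ≠ δ := fun h => hδ ⟨ed l, hxmem l hlp, h ▸ hc⟩
    exact ⟨c, m, hm, (kswap_off hab hg₀ hcα hcδ).2 hc,
      (kswap_free_off hab hg₀ hcα hcδ).2 hf⟩
  by_cases hRu : KReach ep φ α δ fx gu
  · by_cases hRw : KReach ep φ α δ fx gw
    · exact hj'ne (chain_endpoint_unique hp hloop hab hfx_mem (Or.inl rfl) hfx_col hxu
        hgw_mem hgw_uniq hwx hgu_mem hgu_uniq hux hRw hRu)
    · by_cases hRuw : KReach ep φ α δ gw gu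
      · refine main gw i₀ hABgw hRw hi₀p ?_ ?_
        · exact kswap_endpoint hab hABgw hgu_mem hgu_col hgu_uniq hRuw
        · intro l h0 hl
          exact hstep_cond gw hABgw l h0 (by omega) (hclean l hl)
      · have huuntouched : ∀ e, vx i₀ ∈ ep e → KReach ep φ α δ gw e → False := by
          intro e hve hre
          have habe : AB φ α δ e := KReach_AB hABgw hre
          have hh : e = gu := hgu_uniq e hve habe
          subst hh
          exact hRuw hre
        have hαu' : Free ep (kswap ep φ α δ gw) (vx i₀) α :=
          (kswap_untouched huuntouched).2 hi₀free
        refine main gw j' hABgw hRw hj'p ?_ ?_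
        · exact kswap_endpoint hab hABgw hgw_mem hgw_col hgw_uniq Relation.ReflTransGen.refl
        · intro l h0 hl
          by_cases hcn : φ (ed l) = some α
          · have hedfx : ed l = fx := hxu (ed l) (hxmem l (by omega)) (Or.inl hcn)
            have hnre : ¬ KReach ep φ α δ gw (ed l) := by
              rw [hedfx]
              intro h
              exact hRw (KReach.symm' h)
            have hli₀ : i₀ < l := by
              rcases Nat.lt_or_ge i₀ l with h' | h'
              · exact h'
              · exact absurd hcn (hclean l (by omega))
            exact ⟨α, i₀, hli₀, by rw [kswap_not_reach hnre]; exact hcn, hαu'⟩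
          · exact hstep_cond gw hABgw l h0 (by omega) hcn
  · refine main gu i₀ hABgu hRu hi₀p ?_ ?_
    · exact kswap_endpoint hab hABgu hgu_mem hgu_col hgu_uniq Relation.ReflTransGen.refl
    · intro l h0 hl
      exact hstep_cond gu hABgu l h0 (by omega) (hclean l hl)

end FanB

section Ext

variable {ep : E → Sym2 V}

/-- The key extension lemma. -/
lemma extend_coloring [Fintype V] [Fintype E] (hloop : ∀ e, ¬ (ep e).IsDiag)
    {Δ μ : ℕ}
    (hΔ : ∀ v : V, Nat.card {e : E // v ∈ ep e} ≤ Δ)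
    (hμ : ∀ s : Sym2 V, Nat.card {e : E // ep e = s} ≤ μ)
    {φ : E → Option (Fin (Δ + μ))} (hp : Proper ep φ) {e₁ : E} (he₁ : φ e₁ = none) :
    ∃ ψ : E → Option (Fin (Δ + μ)), Proper ep ψ ∧ (∀ e, (φ e).isSome → (ψ e).isSome) ∧
      (ψ e₁).isSome := by
  by_contra hnext
  have hnext : NoExt ep φ e₁ := hnext
  obtain ⟨x, hx⟩ : ∃ x, x ∈ ep e₁ :=
    Sym2.ind (fun u w => ⟨u, Sym2.mem_mk_left u w⟩) (ep e₁)
  set y₁ := oth ep e₁ x with hy₁def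
  have hxy : ep e₁ = s(x, y₁) := oth_spec hx
  have hy₁mem : y₁ ∈ ep e₁ := mem_oth hx
  have hEv : ∀ v : V, (Finset.univ.filter (fun e => v ∈ ep e)).card ≤ Δ := by
    intro v
    calc (Finset.univ.filter (fun e => v ∈ ep e)).card
        = Fintype.card {e : E // v ∈ ep e} := (Fintype.card_subtype _).symm
      _ = Nat.card {e : E // v ∈ ep e} := (Nat.card_eq_fintype_card).symm
      _ ≤ Δ := hΔ v
  set freeF : V → Finset (Fin (Δ + μ)) :=
    fun v => Finset.univ.filter (fun c => Free ep φ v c) with hfreeF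
  have hused : ∀ v : V,
      (Finset.univ.filter (fun c : Fin (Δ + μ) => ¬ Free ep φ v c)).card ≤
        (Finset.univ.filter (fun e : E => v ∈ ep e ∧ (φ e).isSome)).card := by
    intro v
    set F : Fin (Δ + μ) → E := fun c =>
      if h : ∃ e, v ∈ ep e ∧ φ e = some c then h.choose else e₁ with hF
    apply Finset.card_le_card_of_injOn F
    · intro c hc
      rw [Finset.mem_coe, Finset.mem_filter] at hc
      have hex : ∃ e, v ∈ ep e ∧ φ e = some c := Classical.not_not.mp hc.2
      have hspec := hex.choose_spec
      rw [Finset.mem_coe, Finset.mem_filter]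
      refine ⟨Finset.mem_univ _, ?_, ?_⟩
      · rw [hF]; simp only [dif_pos hex]; exact hspec.1
      · rw [hF]; simp only [dif_pos hex]; rw [hspec.2]; rfl
    · intro c hc c' hc' hcc
      rw [Finset.coe_filter, Set.mem_setOf_eq] at hc hc'
      have hex : ∃ e, v ∈ ep e ∧ φ e = some c := Classical.not_not.mp hc.2
      have hex' : ∃ e, v ∈ ep e ∧ φ e = some c' := Classical.not_not.mp hc'.2
      have h1 := hex.choose_spec.2
      have h2 := hex'.choose_spec.2
      rw [hF] at hcc
      simp only [dif_pos hex, dif_pos hex'] at hcc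
      rw [hcc] at h1
      rw [h1] at h2
      exact Option.some.inj h2
  have hfree_card : ∀ v : V, (freeF v).card +
      (Finset.univ.filter (fun c : Fin (Δ + μ) => ¬ Free ep φ v c)).card = Δ + μ := by
    intro v
    rw [hfreeF]
    rw [Finset.card_filter_add_card_filter_not]
    simp
  have hfree_ge : ∀ v : V, μ ≤ (freeF v).card := by
    intro v
    have h1 := hused v
    have h2 : (Finset.univ.filter (fun e : E => v ∈ ep e ∧ (φ e).isSome)).card ≤ Δ := by
      refine le_trans (Finset.card_le_card ?_) (hEv v)
      intro e he
      rw [Finset.mem_filter] at he ⊢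
      exact ⟨he.1, he.2.1⟩
    have h3 := hfree_card v
    omega
  have hfree_ge1 : ∀ v : V, v ∈ ep e₁ → μ + 1 ≤ (freeF v).card := by
    intro v hv
    have h1 := hused v
    have h2 : (Finset.univ.filter (fun e : E => v ∈ ep e ∧ (φ e).isSome)).card < Δ := by
      refine lt_of_lt_of_le (Finset.card_lt_card ?_) (hEv v)
      rw [Finset.ssubset_iff_of_subset]
      · refine ⟨e₁, ?_, ?_⟩
        · rw [Finset.mem_filter]; exact ⟨Finset.mem_univ _, hv⟩
        · rw [Finset.mem_filter]
          intro hcon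
          rw [he₁] at hcon
          exact absurd hcon.2.2 (by simp)
      · intro e he
        rw [Finset.mem_filter] at he ⊢
        exact ⟨he.1, he.2.1⟩
    have h3 := hfree_card v
    omega
  have hμ1 : 1 ≤ μ := by
    refine le_trans ?_ (hμ (ep e₁))
    have hpos : 0 < Nat.card {e : E // ep e = ep e₁} := by
      rw [Nat.card_eq_fintype_card]
      exact Fintype.card_pos_iff.mpr ⟨⟨e₁, rfl⟩⟩
    omega
  obtain ⟨δ, hδ⟩ : ∃ δ, Free ep φ x δ := by
    have h1 := hfree_ge1 x hx
    have h2 : (freeF x).Nonempty := Finset.card_pos.mp (by omega)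
    obtain ⟨δ, hδ⟩ := h2
    rw [hfreeF, Finset.mem_filter] at hδ
    exact ⟨δ, hδ.2⟩
  have hfan_bdd : ∀ pp (ed : ℕ → E) (vx : ℕ → V), IsFan ep φ x e₁ pp ed vx →
      pp ≤ Fintype.card E := by
    intro pp ed vx hf
    have hinj : Function.Injective (fun i : Fin pp => ed i.1) := by
      intro i j hij
      exact Fin.ext (hf.inj i.1 i.2 j.1 j.2 hij)
    calc pp = Fintype.card (Fin pp) := (Fintype.card_fin pp).symm
      _ ≤ Fintype.card E := Fintype.card_le_of_injective _ hinj
  have hfan1 : ∃ (ed : ℕ → E) (vx : ℕ → V), IsFan ep φ x e₁ 1 ed vx := by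
    refine ⟨fun _ => e₁, fun _ => y₁, ⟨Nat.one_pos, rfl, ?_, ?_, ?_⟩⟩
    · intro i hi
      have hi0 : i = 0 := by omega
      subst hi0
      exact hxy
    · intro i hi j hj _
      omega
    · intro i h0 hi
      omega
  have hcardE : 1 ≤ Fintype.card E := Fintype.card_pos_iff.mpr ⟨e₁⟩
  classical
  obtain ⟨pm, hpmex, hmax⟩ :
      ∃ pm, (∃ (ed : ℕ → E) (vx : ℕ → V), IsFan ep φ x e₁ pm ed vx) ∧
        (∀ q, (∃ (ed : ℕ → E) (vx : ℕ → V), IsFan ep φ x e₁ q ed vx) → q ≤ pm) := by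
    by_contra hcon
    push_neg at hcon
    have hgrow : ∀ n, ∃ (p : ℕ) (ed : ℕ → E) (vx : ℕ → V),
        IsFan ep φ x e₁ p ed vx ∧ n ≤ p := by
      intro n
      induction n with
      | zero =>
        obtain ⟨ed, vx, hf⟩ := hfan1
        exact ⟨1, ed, vx, hf, by omega⟩
      | succ k ih =>
        obtain ⟨p, ed, vx, hf, hge⟩ := ih
        obtain ⟨q, hfq, hlt⟩ := hcon p ⟨ed, vx, hf⟩
        obtain ⟨edq, vxq, hfq'⟩ := hfq
        exact ⟨q, edq, vxq, hfq', by omega⟩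
    obtain ⟨p, ed, vx, hf, hge⟩ := hgrow (Fintype.card E + 1)
    have := hfan_bdd p ed vx hf
    omega
  have hpm1 : 1 ≤ pm := hmax 1 hfan1
  obtain ⟨ed, vx, hfan⟩ := hpmex
  have hvx0 : ep e₁ = s(x, vx 0) := by
    have hh := hfan.ends 0 (by omega)
    rw [hfan.first] at hh
    exact hh
  have hxmem : ∀ l, l < pm → x ∈ ep (ed l) := by
    intro l hl; rw [hfan.ends l hl]; exact Sym2.mem_mk_left _ _
  have hsat : ∀ f, x ∈ ep f → ∀ c, φ f = some c →
      (∃ m, m < pm ∧ Free ep φ (vx m) c) → ∃ l, l < pm ∧ ed l = f := by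
    intro f hxf c hfc hex
    obtain ⟨m, hm, hmfree⟩ := hex
    by_contra hcon
    push_neg at hcon
    have hnew : ∃ (ed : ℕ → E) (vx : ℕ → V), IsFan ep φ x e₁ (pm + 1) ed vx := by
      refine ⟨fun l => if l = pm then f else ed l,
        fun l => if l = pm then oth ep f x else vx l,
        ⟨by omega, ?_, ?_, ?_, ?_⟩⟩
      · rw [if_neg (by omega)]; exact hfan.first
      · intro i hi
        rcases Nat.lt_or_ge i pm with h' | h'
        · rw [if_neg (by omega), if_neg (by omega)]; exact hfan.ends i h'
        · have hi' : i = pm := by omega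
          subst hi'
          rw [if_pos rfl, if_pos rfl]
          exact oth_spec hxf
      · intro i hi j hj hij
        rcases Nat.lt_or_ge i pm with h' | h' <;> rcases Nat.lt_or_ge j pm with h'' | h''
        · rw [if_neg (by omega), if_neg (by omega)] at hij
          exact hfan.inj i h' j h'' hij
        · have hj' : j = pm := by omega
          subst hj'
          rw [if_neg (by omega), if_pos rfl] at hij
          exact absurd hij (hcon i h')
        · have hi' : i = pm := by omega
          subst hi'
          rw [if_pos rfl, if_neg (by omega)] at hij
          exact absurd hij.symm (hcon j h'')
        · omega
      · intro i h0 hi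
        rcases Nat.lt_or_ge i pm with h' | h'
        · obtain ⟨c', m', hm', hc', hf'⟩ := hfan.cond i h0 h'
          exact ⟨c', m', hm', by rw [if_neg (by omega)]; exact hc',
            by rw [if_neg (by omega)]; exact hf'⟩
        · have hi' : i = pm := by omega
          subst hi'
          exact ⟨c, m, hm, by rw [if_pos rfl]; exact hfc,
            by rw [if_neg (by omega)]; exact hmfree⟩
    have := hmax (pm + 1) hnew
    omega
  set Y : Finset V := (Finset.range pm).image vx with hY
  have hy₁Y : vx 0 ∈ Y := Finset.mem_image.mpr ⟨0, Finset.mem_range.mpr (by omega), rfl⟩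
  set t := Y.card with ht
  have ht1 : 1 ≤ t := Finset.card_pos.mpr ⟨vx 0, hy₁Y⟩
  have hdisj : ∀ y ∈ Y, ∀ y' ∈ Y, y ≠ y' → Disjoint (freeF y) (freeF y') := by
    intro y hy y' hy' hne
    obtain ⟨l, hl, rfl⟩ := Finset.mem_image.mp hy
    obtain ⟨l', hl', rfl⟩ := Finset.mem_image.mp hy'
    rw [Finset.mem_range] at hl hl'
    rw [Finset.disjoint_left]
    intro c hc hc'
    rw [hfreeF, Finset.mem_filter] at hc hc'
    exact fanB hp hloop hnext he₁ hfan hδ hl hl' hne hc.2 hc'.2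
  have hsum_lb : t * μ + 1 ≤ ∑ y ∈ Y, (freeF y).card := by
    have h1 : (freeF (vx 0)).card + ∑ y ∈ Y.erase (vx 0), (freeF y).card =
        ∑ y ∈ Y, (freeF y).card := Finset.add_sum_erase Y (fun y => (freeF y).card) hy₁Y
    have h2 : (Y.erase (vx 0)).card • μ ≤ ∑ y ∈ Y.erase (vx 0), (freeF y).card :=
      Finset.card_nsmul_le_sum _ _ _ (fun y _ => hfree_ge y)
    have h3 : (Y.erase (vx 0)).card = t - 1 := by
      rw [Finset.card_erase_of_mem hy₁Y]
    have h4 : μ + 1 ≤ (freeF (vx 0)).card := by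
      apply hfree_ge1
      rw [hvx0]
      exact Sym2.mem_mk_right _ _
    have h5 : (t - 1) * μ + μ = t * μ := by
      have h6 : t - 1 + 1 = t := by omega
      calc (t - 1) * μ + μ = (t - 1 + 1) * μ := by ring
        _ = t * μ := by rw [h6]
    rw [smul_eq_mul, h3] at h2
    omega
  have hU_card : ∑ y ∈ Y, (freeF y).card = (Y.biUnion freeF).card :=
    (Finset.card_biUnion hdisj).symm
  have hUex : ∀ c : Fin (Δ + μ), c ∈ Y.biUnion freeF →
      ∃ l, 0 < l ∧ l < pm ∧ φ (ed l) = some c := by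
    intro c hc
    rw [Finset.mem_biUnion] at hc
    obtain ⟨y, hy, hcy⟩ := hc
    obtain ⟨m, hm, rfl⟩ := Finset.mem_image.mp hy
    rw [Finset.mem_range] at hm
    rw [hfreeF, Finset.mem_filter] at hcy
    have hnfx : ¬ Free ep φ x c := fun h => fanA hp hnext hfan hm h hcy.2
    obtain ⟨f, hxf, hfc⟩ := Classical.not_not.mp hnfx
    obtain ⟨l, hl, hedl⟩ := hsat f hxf c hfc ⟨m, hm, hcy.2⟩
    have hl0 : 0 < l := by
      rcases Nat.eq_zero_or_pos l with rfl | h'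
      · rw [hfan.first] at hedl
        rw [← hedl, he₁] at hfc
        cases hfc
      · exact h'
    exact ⟨l, hl0, hl, by rw [hedl]; exact hfc⟩
  have hU_ub : (Y.biUnion freeF).card ≤ pm - 1 := by
    have hIoo : (Finset.Ioo 0 pm).card = pm - 1 := by
      rw [Nat.card_Ioo]
      omega
    rw [← hIoo]
    set F : Fin (Δ + μ) → ℕ := fun c =>
      if h : ∃ l, 0 < l ∧ l < pm ∧ φ (ed l) = some c then h.choose else 0 with hF
    apply Finset.card_le_card_of_injOn F
    · intro c hc
      have hex := hUex c hc
      have hspec := hex.choose_spec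
      rw [hF]
      simp only [dif_pos hex]
      rw [Finset.mem_coe, Finset.mem_Ioo]
      exact ⟨hspec.1, hspec.2.1⟩
    · intro c hc c' hc' hcc
      have hex := hUex c (by simpa using hc)
      have hex' := hUex c' (by simpa using hc')
      rw [hF] at hcc
      simp only [dif_pos hex, dif_pos hex'] at hcc
      have h1 := hex.choose_spec.2.2
      have h2 := hex'.choose_spec.2.2
      rw [hcc] at h1
      rw [h1] at h2
      exact Option.some.inj h2
  have hpm_ub : pm ≤ t * μ := by
    have hfib : (Finset.range pm).card = ∑ y ∈ Y, ((Finset.range pm).filter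
        (fun l => vx l = y)).card := by
      apply Finset.card_eq_sum_card_fiberwise
      intro l hl
      exact Finset.mem_image.mpr ⟨l, hl, rfl⟩
    have hfib_ub : ∀ y ∈ Y, ((Finset.range pm).filter (fun l => vx l = y)).card ≤ μ := by
      intro y _
      have hcard : (Finset.univ.filter (fun e : E => ep e = s(x, y))).card ≤ μ := by
        calc (Finset.univ.filter (fun e : E => ep e = s(x, y))).card
            = Fintype.card {e : E // ep e = s(x, y)} := (Fintype.card_subtype _).symm
          _ = Nat.card {e : E // ep e = s(x, y)} := (Nat.card_eq_fintype_card).symm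
          _ ≤ μ := hμ _
      refine le_trans (Finset.card_le_card_of_injOn ed ?_ ?_) hcard
      · intro l hl
        rw [Finset.mem_coe, Finset.mem_filter, Finset.mem_range] at hl
        rw [Finset.mem_coe, Finset.mem_filter]
        refine ⟨Finset.mem_univ _, ?_⟩
        rw [hfan.ends l hl.1, hl.2]
      · intro l hl l' hl' hll
        rw [Finset.coe_filter, Set.mem_setOf_eq, Finset.mem_range] at hl hl'
        exact hfan.inj l hl.1 l' hl'.1 hll
    calc pm = (Finset.range pm).card := (Finset.card_range pm).symm
      _ = ∑ y ∈ Y, ((Finset.range pm).filter (fun l => vx l = y)).card := hfib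
      _ ≤ ∑ _y ∈ Y, μ := Finset.sum_le_sum hfib_ub
      _ = t * μ := by rw [Finset.sum_const, smul_eq_mul]
  have hfinal : t * μ + 1 ≤ pm - 1 := by
    calc t * μ + 1 ≤ ∑ y ∈ Y, (freeF y).card := hsum_lb
      _ = (Y.biUnion freeF).card := hU_card
      _ ≤ pm - 1 := hU_ub
  omega

end Ext


section Master

variable {ep : E → Sym2 V}

lemma color_all [Fintype V] [Fintype E] (hloop : ∀ e, ¬ (ep e).IsDiag)
    {Δ μ : ℕ}
    (hΔ : ∀ v : V, Nat.card {e : E // v ∈ ep e} ≤ Δ)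
    (hμ : ∀ s : Sym2 V, Nat.card {e : E // ep e = s} ≤ μ) :
    ∀ (k : ℕ) (φ : E → Option (Fin (Δ + μ))), Proper ep φ →
      (Finset.univ.filter (fun e => φ e = none)).card ≤ k →
      ∃ ψ : E → Option (Fin (Δ + μ)), Proper ep ψ ∧ ∀ e, (ψ e).isSome := by
  intro k
  induction k with
  | zero =>
    intro φ hp hcard
    refine ⟨φ, hp, ?_⟩
    intro e
    have hne : e ∉ Finset.univ.filter (fun e => φ e = none) := by
      intro h
      have := Finset.card_pos.mpr ⟨e, h⟩
      omega
    rw [Finset.mem_filter] at hne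
    push_neg at hne
    exact Option.ne_none_iff_isSome.mp (hne (Finset.mem_univ e))
  | succ k ih =>
    intro φ hp hcard
    by_cases hall : ∀ e, (φ e).isSome
    · exact ⟨φ, hp, hall⟩
    · push_neg at hall
      obtain ⟨e₁, he₁⟩ := hall
      have he₁' : φ e₁ = none := by
        rcases h : φ e₁ with _ | c
        · rfl
        · rw [h] at he₁; exact absurd rfl he₁
      obtain ⟨ψ₁, hψp, hdom, hsome⟩ := extend_coloring hloop hΔ hμ hp he₁'
      apply ih ψ₁ hψp
      have hsub : Finset.univ.filter (fun e => ψ₁ e = none) ⊆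
          (Finset.univ.filter (fun e => φ e = none)).erase e₁ := by
        intro e he
        rw [Finset.mem_filter] at he
        rw [Finset.mem_erase, Finset.mem_filter]
        refine ⟨?_, Finset.mem_univ _, ?_⟩
        · intro hcon
          subst hcon
          rw [he.2] at hsome
          exact absurd hsome (by simp)
        · rcases h : φ e with _ | c
          · rfl
          · have := hdom e (by rw [h]; rfl)
            rw [he.2] at this
            exact absurd this (by simp)
      have h1 : ((Finset.univ.filter (fun e => φ e = none)).erase e₁).card =
          (Finset.univ.filter (fun e => φ e = none)).card - 1 := by
        apply Finset.card_erase_of_mem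
        rw [Finset.mem_filter]
        exact ⟨Finset.mem_univ _, he₁'⟩
      have h2 := Finset.card_le_card hsub
      omega

end Master

/-- Vizing's theorem for multigraphs. -/
theorem vizing_multigraph [Fintype V] [Fintype E]
    (ep : E → Sym2 V) (hloop : ∀ e, ¬ (ep e).IsDiag)
    (Δ μ : ℕ)
    (hΔ : ∀ v : V, Nat.card {e : E // v ∈ ep e} ≤ Δ)
    (hμ : ∀ s : Sym2 V, Nat.card {e : E // ep e = s} ≤ μ) :
    ∃ c : E → Fin (Δ + μ), ∀ e e' : E, e ≠ e' →
      (∃ v : V, v ∈ ep e ∧ v ∈ ep e') → c e ≠ c e' := by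
  classical
  have hp0 : Proper ep (fun _ : E => (none : Option (Fin (Δ + μ)))) := by
    intro e e' c hne hsh hc
    exact absurd hc (by simp)
  obtain ⟨ψ, hp, hall⟩ := color_all hloop hΔ hμ (Fintype.card E)
    (fun _ => none) hp0 (le_trans (Finset.card_filter_le _ _) (by simp))
  refine ⟨fun e => (ψ e).get (hall e), ?_⟩
  intro e e' hne hsh hEq
  have hEq' : (ψ e).get (hall e) = (ψ e').get (hall e') := hEq
  have h1 : ψ e = some ((ψ e).get (hall e)) := (Option.some_get (hall e)).symm
  have h2 : ψ e' = some ((ψ e).get (hall e)) := by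
    rw [hEq']
    exact (Option.some_get (hall e')).symm
  exact hp e e' _ hne hsh h1 h2

end V11

/-- Vizing's theorem for multigraphs (Ore/Vizing bound): a loopless multigraph with
maximum degree at most `Δ` and edge multiplicity at most `μ` admits a proper edge
coloring with `Δ + μ` colors. Edges are given by an index type `E` with endpoint
map `ep : E → Sym2 V`. -/
theorem stmt_11 {V E : Type*} [Fintype V] [Fintype E]
    (ep : E → Sym2 V) (hloop : ∀ e, ¬ (ep e).IsDiag)
    (Δ μ : ℕ)
    (hΔ : ∀ v : V, Nat.card {e : E // v ∈ ep e} ≤ Δ)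
    (hμ : ∀ s : Sym2 V, Nat.card {e : E // ep e = s} ≤ μ) :
    ∃ c : E → Fin (Δ + μ), ∀ e e' : E, e ≠ e' →
      (∃ v : V, v ∈ ep e ∧ v ∈ ep e') → c e ≠ c e' := by
  exact V11.vizing_multigraph ep hloop Δ μ hΔ hμ
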